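/- Let q be an odd prime power, m a positive integer with 2^m | (q-1), k ≥ 2 an even integer, b_1,...,b_k ∈ F_q^*, and let N denote the number of solutions in F_q^n to x_1^{2^m} + ... + x_n^{2^m} = 0. Then the number of solutions in F_q^{n+k} to x_1^{2^m} + ... + x_n^{2^m} + b_1 y_1^2 + ... + b_k y_k^2 = 0 equals q^{n+k-1} + η((-1)^{k/2} b_1⋯b_k) q^{k/2} (N - q^{n-1}). -/

import Mathlib

open Finset

universe u
variable {F : Type u} [Field F] [Fintype F] [DecidableEq F]



-- L1
lemma mylem_card_sq (hF : ringChar F ≠ 2) (a : F) :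
    (Fintype.card {y : F // y ^ 2 = a} : ℤ) = quadraticChar F a + 1 := by
  have := quadraticChar_card_sqrts hF a
  rw [← this, Set.toFinset_card]
  norm_cast

-- L2
lemma mylem_sum_sq (hF : ringChar F ≠ 2) (g : F → ℤ) :
    ∑ y : F, g (y ^ 2) = ∑ u : F, (quadraticChar F u + 1) * g u := by
  rw [← Fintype.sum_fiberwise (fun y : F => y ^ 2) (fun y => g (y ^ 2))]
  refine Finset.sum_congr rfl fun u _ => ?_
  have : ∀ a : {y : F // y ^ 2 = u}, g (a.1 ^ 2) = g u := fun a => by rw [a.2]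
  rw [Finset.sum_congr rfl (fun a _ => this a), Finset.sum_const, nsmul_eq_mul, card_univ]
  rw [← mylem_card_sq hF u]

lemma mylem_chi_sq (hF : ringChar F ≠ 2) {a : F} (ha : a ≠ 0) :
    (quadraticChar F a) * (quadraticChar F a) = 1 := by
  rw [← map_mul]
  exact quadraticChar_one_iff_isSquare (mul_ne_zero ha ha) |>.mpr ⟨a, rfl⟩

-- L3 : convolution
lemma mylem_conv (hF : ringChar F ≠ 2) (c : F) :
    ∑ u : F, quadraticChar F u * quadraticChar F (c - u) =
      if c = 0 then (Fintype.card F - 1) * quadraticChar F (-1) else -quadraticChar F (-1) := by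
  rcases eq_or_ne c 0 with rfl | hc
  · rw [if_pos rfl]
    have : ∀ u : F, quadraticChar F u * quadraticChar F (0 - u)
        = quadraticChar F (-1) * (quadraticChar F u * quadraticChar F u) := by
      intro u
      rw [zero_sub, show (-u : F) = -1 * u by ring, map_mul]
      ring
    rw [Finset.sum_congr rfl fun u _ => this u, ← Finset.mul_sum]
    have h2 : ∑ u : F, quadraticChar F u * quadraticChar F u
        = (Fintype.card F : ℤ) - 1 := by
      rw [Finset.sum_eq_sum_sdiff_singleton_add (mem_univ (0 : F))]
      simp only [MulChar.map_zero, mul_zero, add_zero]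
      have : ∀ u ∈ univ \ {(0:F)}, quadraticChar F u * quadraticChar F u = 1 := by
        intro u hu
        simp only [mem_sdiff, mem_singleton, mem_univ, true_and] at hu
        exact mylem_chi_sq hF hu
      rw [Finset.sum_congr rfl this, Finset.sum_const]
      simp [Finset.card_sdiff_of_subset, card_univ, Nat.cast_sub Fintype.card_pos]
    rw [h2]; ring
  · rw [if_neg hc]
    have key : ∑ u : F, quadraticChar F u * quadraticChar F (c - u)
        = ∑ t : F, quadraticChar F (c * t) * quadraticChar F (c - c * t) := by
      exact (Equiv.sum_comp (Equiv.mulLeft₀ c hc) fun u =>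
        quadraticChar F u * quadraticChar F (c - u)).symm
    rw [key]
    have : ∀ t : F, quadraticChar F (c * t) * quadraticChar F (c - c * t)
        = (quadraticChar F c * quadraticChar F c) *
          (quadraticChar F t * quadraticChar F (1 - t)) := by
      intro t
      rw [show c - c * t = c * (1 - t) by ring, map_mul, map_mul]
      ring
    rw [Finset.sum_congr rfl fun t _ => this t, ← Finset.mul_sum, mylem_chi_sq hF hc, one_mul]
    have := jacobiSum_nontrivial_inv (quadraticChar_ne_one hF)
    rwa [(quadraticChar_isQuadratic F).inv] at this

-- generic product card
lemma mylem_card_prod {α β : Type*} [Fintype α] [Fintype β] (p : α → β → Prop)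
    [∀ a b, Decidable (p a b)] :
    (Fintype.card {z : α × β // p z.1 z.2} : ℤ)
      = ∑ a : α, (Fintype.card {y : β // p a y} : ℤ) := by
  rw [Fintype.card_congr (Equiv.subtypeProdEquivSigmaSubtype p), Fintype.card_sigma]
  push_cast
  rfl

-- L4
lemma mylem_card_bsq (hF : ringChar F ≠ 2) {b : F} (hbne : b ≠ 0) (c : F) :
    (Fintype.card {y : F // b * y ^ 2 = c} : ℤ) = quadraticChar F (b * c) + 1 := by
  have e : {y : F // b * y ^ 2 = c} ≃ {y : F // y ^ 2 = b⁻¹ * c} :=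
    Equiv.subtypeEquivRight (fun y => by
      constructor
      · rintro rfl; field_simp
      · intro h; rw [h]; field_simp)
  rw [Fintype.card_congr e, mylem_card_sq hF]
  have hinv : quadraticChar F b⁻¹ = quadraticChar F b := by
    have h1 : quadraticChar F b⁻¹ * quadraticChar F b * quadraticChar F b
        = quadraticChar F b := by
      rw [← map_mul, inv_mul_cancel₀ hbne, map_one, one_mul]
    rw [mul_assoc, mylem_chi_sq hF hbne, mul_one] at h1
    exact h1
  rw [map_mul, map_mul, hinv]

lemma mylem_two (hF : ringChar F ≠ 2) {b₁ b₂ : F} (h₁ : b₁ ≠ 0) (h₂ : b₂ ≠ 0) (c : F) :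
    (Fintype.card {p : F × F // b₁ * p.1 ^ 2 + b₂ * p.2 ^ 2 = c} : ℤ)
      = Fintype.card F + quadraticChar F (-(b₁ * b₂)) *
          (if c = 0 then (Fintype.card F : ℤ) - 1 else -1) := by
  rw [mylem_card_prod (fun y₁ y₂ : F => b₁ * y₁ ^ 2 + b₂ * y₂ ^ 2 = c)]
  have step1 : ∀ a : F, (Fintype.card {y : F // b₁ * a ^ 2 + b₂ * y ^ 2 = c} : ℤ)
      = quadraticChar F ((b₂ * c) - (b₂ * b₁) * a ^ 2) + 1 := by
    intro a
    have e : {y : F // b₁ * a ^ 2 + b₂ * y ^ 2 = c} ≃ {y : F // b₂ * y ^ 2 = c - b₁ * a ^ 2} :=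
      Equiv.subtypeEquivRight (fun y => by constructor <;> intro h <;> linear_combination h)
    rw [Fintype.card_congr e, mylem_card_bsq hF h₂]
    congr 2
    ring
  rw [Finset.sum_congr rfl fun a _ => step1 a, Finset.sum_add_distrib, Finset.sum_const,
    card_univ, nsmul_eq_mul, mul_one]
  have step2 : ∑ a : F, quadraticChar F ((b₂ * c) - (b₂ * b₁) * a ^ 2)
      = ∑ u : F, (quadraticChar F u + 1) * quadraticChar F ((b₂ * c) - (b₂ * b₁) * u) :=
    mylem_sum_sq hF (fun u => quadraticChar F ((b₂ * c) - (b₂ * b₁) * u))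
  rw [step2]
  have hbb : b₂ * b₁ ≠ 0 := mul_ne_zero h₂ h₁
  have split : ∑ u : F, (quadraticChar F u + 1) * quadraticChar F ((b₂ * c) - (b₂ * b₁) * u)
      = (∑ u : F, quadraticChar F u * quadraticChar F ((b₂ * c) - (b₂ * b₁) * u))
        + ∑ u : F, quadraticChar F ((b₂ * c) - (b₂ * b₁) * u) := by
    rw [← Finset.sum_add_distrib]
    exact Finset.sum_congr rfl fun u _ => by ring
  rw [split]
  have sum0 : ∑ u : F, quadraticChar F ((b₂ * c) - (b₂ * b₁) * u) = 0 := by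
    have h := Equiv.sum_comp ((Equiv.mulLeft₀ (b₂ * b₁) hbb).trans (Equiv.subLeft (b₂ * c)))
      (fun v => quadraticChar F v)
    simp only [Equiv.trans_apply, Equiv.subLeft_apply, Equiv.mulLeft₀_apply] at h
    rw [h]
    exact quadraticChar_sum_zero hF
  rw [sum0, add_zero]
  -- main character sum
  set c' := b₁⁻¹ * c with hc'
  have harg : ∀ u : F, (b₂ * c) - (b₂ * b₁) * u = (-(b₁ * b₂)) * (u - c') := by
    intro u; rw [hc']; field_simp; ring
  have hm1 : (-1 : F) ≠ 0 := neg_ne_zero.mpr one_ne_zero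
  have hterm : ∀ u : F, quadraticChar F u * quadraticChar F ((b₂ * c) - (b₂ * b₁) * u)
      = quadraticChar F (-(b₁ * b₂)) * quadraticChar F (-1) *
        (quadraticChar F u * quadraticChar F (c' - u)) := by
    intro u
    rw [harg u, show (u - c' : F) = -1 * (c' - u) by ring, map_mul, map_mul]
    ring
  rw [Finset.sum_congr rfl fun u _ => hterm u, ← Finset.mul_sum, mylem_conv hF]
  have hc'0 : (c' = 0) ↔ (c = 0) := by
    rw [hc']; constructor
    · intro h; field_simp at h; simpa using h
    · intro h; rw [h, mul_zero]
  by_cases hc : c = 0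
  · rw [if_pos (hc'0.mpr hc), if_pos hc]
    have hx := mylem_chi_sq hF hm1
    linear_combination (quadraticChar F (-(b₁ * b₂)) * ((Fintype.card F : ℤ) - 1)) * hx
  · rw [if_neg (fun h => hc (hc'0.mp h)), if_neg hc]
    have hx := mylem_chi_sq hF hm1
    linear_combination (-(quadraticChar F (-(b₁ * b₂)))) * hx

lemma mylem_alpha (hF : ringChar F ≠ 2) {α : Type*} [Fintype α] [DecidableEq α] (S : α → F)
    {b₁ b₂ : F} (h₁ : b₁ ≠ 0) (h₂ : b₂ ≠ 0) :
    (Fintype.card {z : α × (F × F) // S z.1 + (b₁ * z.2.1 ^ 2 + b₂ * z.2.2 ^ 2) = 0} : ℤ)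
      = (Fintype.card F : ℤ) * Fintype.card α + quadraticChar F (-(b₁ * b₂)) *
          ((Fintype.card F : ℤ) * Fintype.card {a : α // S a = 0} - Fintype.card α) := by
  rw [mylem_card_prod (fun a (y : F × F) => S a + (b₁ * y.1 ^ 2 + b₂ * y.2 ^ 2) = 0)]
  have step : ∀ a : α, (Fintype.card {y : F × F // S a + (b₁ * y.1 ^ 2 + b₂ * y.2 ^ 2) = 0} : ℤ)
      = Fintype.card F + quadraticChar F (-(b₁ * b₂)) *
          (if S a = 0 then (Fintype.card F : ℤ) - 1 else -1) := by
    intro a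
    have e : {y : F × F // S a + (b₁ * y.1 ^ 2 + b₂ * y.2 ^ 2) = 0}
        ≃ {y : F × F // b₁ * y.1 ^ 2 + b₂ * y.2 ^ 2 = -S a} :=
      Equiv.subtypeEquivRight (fun y => by constructor <;> intro h <;> linear_combination h)
    rw [Fintype.card_congr e, mylem_two hF h₁ h₂]
    simp [neg_eq_zero]
  rw [Finset.sum_congr rfl fun a _ => step a, Finset.sum_add_distrib, Finset.sum_const,
    card_univ, nsmul_eq_mul, ← Finset.mul_sum]
  have hsum : ∑ a : α, (if S a = 0 then (Fintype.card F : ℤ) - 1 else -1)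
      = (Fintype.card F : ℤ) * Fintype.card {a : α // S a = 0} - Fintype.card α := by
    rw [Finset.sum_ite, Finset.sum_const, Finset.sum_const]
    have hc1 : (univ.filter fun a : α => S a = 0).card = Fintype.card {a : α // S a = 0} :=
      (Fintype.card_subtype _).symm
    have hc2 : (univ.filter fun a : α => ¬(S a = 0)).card
        = Fintype.card α - Fintype.card {a : α // S a = 0} := by
      rw [hc1.symm, Finset.filter_not, Finset.card_sdiff_of_subset (Finset.filter_subset _ _), card_univ]
    rw [hc1, hc2, nsmul_eq_mul, nsmul_eq_mul]
    have hle : Fintype.card {a : α // S a = 0} ≤ Fintype.card α := Fintype.card_subtype_le _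
    push_cast [Nat.cast_sub hle]
    ring
  rw [hsum]
  ring

lemma mylem_main (hF : ringChar F ≠ 2) (t : ℕ) :
    ∀ (k : ℕ), k = 2 * t + 2 → ∀ {α : Type u} [Fintype α] [DecidableEq α] (S : α → F)
      (b : Fin k → F), (∀ j, b j ≠ 0) →
    (Fintype.card {z : α × (Fin k → F) // S z.1 + ∑ j, b j * z.2 j ^ 2 = 0} : ℤ)
      = (Fintype.card F : ℤ) ^ (2 * t + 1) * Fintype.card α +
        quadraticChar F ((-1 : F) ^ (t + 1) * ∏ j, b j) * (Fintype.card F : ℤ) ^ t *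
          ((Fintype.card F : ℤ) * Fintype.card {a : α // S a = 0} - Fintype.card α) := by
  induction t with
  | zero =>
    intro k hk α _ _ S b hb
    subst hk
    have e : {z : α × (Fin 2 → F) // S z.1 + ∑ j, b j * z.2 j ^ 2 = 0}
        ≃ {z : α × (F × F) // S z.1 + (b 0 * z.2.1 ^ 2 + b 1 * z.2.2 ^ 2) = 0} := by
      refine Equiv.subtypeEquiv ((Equiv.refl α).prodCongr (piFinTwoEquiv fun _ => F)) fun z => ?_
      obtain ⟨a, y⟩ := z
      simp [Fin.sum_univ_two]
    rw [Fintype.card_congr e, mylem_alpha hF S (hb 0) (hb 1)]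
    have harg : ((-1 : F) ^ (0 + 1) * ∏ j : Fin 2, b j) = -(b 0 * b 1) := by
      rw [Fin.prod_univ_two]; ring
    rw [harg]
    push_cast
    ring
  | succ t ih =>
    intro k hk α _ _ S b hb
    have hk2 : k = (2 * t + 2) + 2 := by omega
    subst hk2
    have hsum : ∀ y : Fin (2 * t + 2 + 2) → F, ∑ j, b j * y j ^ 2
        = (∑ j : Fin (2 * t + 2), b (Fin.castAdd 2 j) * y (Fin.castAdd 2 j) ^ 2)
          + (b (Fin.natAdd (2 * t + 2) 0) * y (Fin.natAdd (2 * t + 2) 0) ^ 2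
            + b (Fin.natAdd (2 * t + 2) 1) * y (Fin.natAdd (2 * t + 2) 1) ^ 2) := by
      intro y
      rw [Fin.sum_univ_add, Fin.sum_univ_two]
    have e : {z : α × (Fin (2 * t + 2 + 2) → F) // S z.1 + ∑ j, b j * z.2 j ^ 2 = 0}
        ≃ {z : (α × (F × F)) × (Fin (2 * t + 2) → F) //
            (fun w : α × (F × F) => S w.1 +
              (b (Fin.natAdd (2 * t + 2) 0) * w.2.1 ^ 2
                + b (Fin.natAdd (2 * t + 2) 1) * w.2.2 ^ 2)) z.1
            + ∑ j, b (Fin.castAdd 2 j) * z.2 j ^ 2 = 0} := by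
      refine Equiv.subtypeEquiv
        ⟨fun z => ((z.1, (z.2 (Fin.natAdd (2 * t + 2) 0), z.2 (Fin.natAdd (2 * t + 2) 1))),
            fun j => z.2 (Fin.castAdd 2 j)),
          fun w => (w.1.1, Fin.append w.2 ![w.1.2.1, w.1.2.2]),
          fun z => ?_, fun w => ?_⟩ (fun z => ?_)
      · obtain ⟨a, y⟩ := z
        refine Prod.ext rfl ?_
        funext j
        refine Fin.addCases (fun i => ?_) (fun i => ?_) j
        · simp [Fin.append_left]
        · fin_cases i <;> simp [Fin.append_right]
      · obtain ⟨⟨a, u, v⟩, g⟩ := w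
        refine Prod.ext (Prod.ext rfl ?_) ?_
        · simp [Fin.append_right]
        · funext j; simp [Fin.append_left]
      · obtain ⟨a, y⟩ := z
        simp only [Equiv.coe_fn_mk]
        rw [hsum y]
        constructor <;> intro h <;> linear_combination h
    rw [Fintype.card_congr e]
    rw [ih (2 * t + 2) rfl (fun w : α × (F × F) => S w.1 +
        (b (Fin.natAdd (2 * t + 2) 0) * w.2.1 ^ 2 + b (Fin.natAdd (2 * t + 2) 1) * w.2.2 ^ 2))
        (fun j => b (Fin.castAdd 2 j)) (fun j => hb _)]
    have hN : (Fintype.card {a : α × F × F // S a.1 +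
          (b (Fin.natAdd (2 * t + 2) 0) * a.2.1 ^ 2
            + b (Fin.natAdd (2 * t + 2) 1) * a.2.2 ^ 2) = 0} : ℤ)
        = (Fintype.card F : ℤ) * Fintype.card α + quadraticChar F
            (-(b (Fin.natAdd (2 * t + 2) 0) * b (Fin.natAdd (2 * t + 2) 1))) *
          ((Fintype.card F : ℤ) * Fintype.card {a : α // S a = 0} - Fintype.card α) :=
      mylem_alpha hF S (hb _) (hb _)
    rw [hN]
    have harg : ((-1 : F) ^ (t + 1 + 1) * ∏ j : Fin (2 * t + 2 + 2), b j)
        = ((-1 : F) ^ (t + 1) * ∏ j : Fin (2 * t + 2), b (Fin.castAdd 2 j))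
          * (-(b (Fin.natAdd (2 * t + 2) 0) * b (Fin.natAdd (2 * t + 2) 1))) := by
      rw [Fin.prod_univ_add, Fin.prod_univ_two]
      ring
    have hprod : quadraticChar F ((-1 : F) ^ (t + 1 + 1) * ∏ j : Fin (2 * t + 2 + 2), b j)
        = quadraticChar F ((-1 : F) ^ (t + 1) * ∏ j : Fin (2 * t + 2), b (Fin.castAdd 2 j))
          * quadraticChar F (-(b (Fin.natAdd (2 * t + 2) 0) * b (Fin.natAdd (2 * t + 2) 1))) := by
      rw [harg, map_mul]
    rw [hprod]
    have hcard : (Fintype.card (α × F × F) : ℤ)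
        = (Fintype.card F : ℤ) * ((Fintype.card F : ℤ) * Fintype.card α) := by
      simp [Fintype.card_prod]; ring
    rw [hcard]
    beta_reduce
    set x := quadraticChar F ((-1 : F) ^ (t + 1) * ∏ j : Fin (2 * t + 2), b (Fin.castAdd 2 j))
      with hx
    set y := quadraticChar F (-(b (Fin.natAdd (2 * t + 2) 0) * b (Fin.natAdd (2 * t + 2) 1)))
      with hy
    clear_value x y
    ring


theorem stmt18 (m k n : ℕ) (hm : 0 < m) (hn : 0 < n) (hk : 2 ≤ k) (hke : Even k)
    (F : Type*) [Field F] [Fintype F] [DecidableEq F] (hodd : Odd (Fintype.card F))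
    (hdvd : 2 ^ m ∣ Fintype.card F - 1)
    (b : Fin k → F) (hb : ∀ j, b j ≠ 0) :
    (Fintype.card {z : (Fin n → F) × (Fin k → F) //
        ∑ i, z.1 i ^ 2 ^ m + ∑ j, b j * z.2 j ^ 2 = 0} : ℤ) =
      (Fintype.card F : ℤ) ^ (n + k - 1) +
        quadraticChar F ((-1 : F) ^ (k / 2) * ∏ j, b j) * (Fintype.card F : ℤ) ^ (k / 2) *
          ((Fintype.card {x : Fin n → F // ∑ i, x i ^ 2 ^ m = 0} : ℤ) -
            (Fintype.card F : ℤ) ^ (n - 1)) := by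
  have hF : ringChar F ≠ 2 := by
    intro h
    have h2 := (FiniteField.even_card_iff_char_two (F := F)).mp h
    rw [Nat.odd_iff] at hodd
    omega
  obtain ⟨t, hkeq⟩ : ∃ t, k = 2 * t + 2 := by
    obtain ⟨s, hs⟩ := hke
    exact ⟨s - 1, by omega⟩
  obtain ⟨n', rfl⟩ : ∃ n', n = n' + 1 := ⟨n - 1, by omega⟩
  subst hkeq
  have key := mylem_main hF t (2 * t + 2) rfl
    (fun x : Fin (n' + 1) → F => ∑ i, x i ^ 2 ^ m) b hb
  rw [key]
  clear key
  have hcard : (Fintype.card (Fin (n' + 1) → F) : ℤ) = (Fintype.card F : ℤ) ^ (n' + 1) := by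
    simp [Fintype.card_fun]
  rw [hcard]
  have e1 : (2 * t + 2) / 2 = t + 1 := by omega
  have e2 : n' + 1 + (2 * t + 2) - 1 = n' + (2 * t + 2) := by omega
  have e3 : n' + 1 - 1 = n' := by omega
  rw [e1, e2, e3]
  set x := quadraticChar F ((-1 : F) ^ (t + 1) * ∏ j : Fin (2 * t + 2), b j) with hx
  clear_value x
  ring
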